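/- Let j ≥ 0 be a half-integer and m₂ a half-integer with j+m₂ ∈ ℤ and −j ≤ m₂ ≤ j, and let n, λ be real numbers. For each sign ε ∈ {+1, −1} and each j₀ ∈ {−1/2, +1/2}: √((j−εm₂)(j+εm₂+1)) · c(j₀, m₂+ε, −ε/2) − (1/2)·(−ε(n+m₂) − λ − 2) · c(j₀, m₂, ε/2) = (1/(2√(2j+1))) · q_{j₀,ε} · κ_{j₀,ε}, where c(−1/2, m, −1/2) = √((j+m)/(2j+1)), c(−1/2, m, +1/2) = −√((j−m)/(2j+1)), c(+1/2, m, −1/2) = √((j−m+1)/(2j+1)), c(+1/2, m, +1/2) = √((j+m+1)/(2j+1)); q_{−1/2,−} = √(j+m₂), q_{−1/2,+} = √(j−m₂), q_{+1/2,−} = √(j−m₂+1), q_{+1/2,+} = √(j+m₂+1); and κ_{−1/2,−} = −(2j−m₂+n−λ), κ_{−1/2,+} = 2j+m₂−n−λ, κ_{+1/2,−} = 2j+m₂−n+λ+2, κ_{+1/2,+} = 2j−m₂+n+λ+2. -/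

import Mathlib

/-- A half-integer is an element of `(1/2)ℤ`. -/
def HalfInt (x : ℝ) : Prop := ∃ k : ℤ, x = k / 2


open Classical in
/-- The Clebsch–Gordan coefficients `c(j₀, m, m₀)` for the tensor product of the
`SU(2)`-representations of spins `j` and `1/2` (Table 1), for `j₀, m₀ ∈ {−1/2, +1/2}`. -/
noncomputable def cgHalf (j j₀ m m₀ : ℝ) : ℝ :=
  if j₀ = -(1 / 2) then
    if m₀ = -(1 / 2) then Real.sqrt ((j + m) / (2 * j + 1))
    else -Real.sqrt ((j - m) / (2 * j + 1))
  else
    if m₀ = -(1 / 2) then Real.sqrt ((j - m + 1) / (2 * j + 1))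
    else Real.sqrt ((j + m + 1) / (2 * j + 1))

open Classical in
/-- The coefficients `q_{j₀,ε}` of Proposition 4.1, for `j₀ ∈ {−1/2, +1/2}` and
`ε ∈ {+1, −1}`. -/
noncomputable def qCoeff (j m₂ j₀ ε : ℝ) : ℝ :=
  if j₀ = -(1 / 2) then
    if ε = 1 then Real.sqrt (j - m₂) else Real.sqrt (j + m₂)
  else
    if ε = 1 then Real.sqrt (j + m₂ + 1) else Real.sqrt (j - m₂ + 1)

open Classical in
/-- The coefficients `κ_{j₀,ε}` of Proposition 4.1, for `j₀ ∈ {−1/2, +1/2}` and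
`ε ∈ {+1, −1}`. -/
noncomputable def kappaCoeff (j m₂ n lam j₀ ε : ℝ) : ℝ :=
  if j₀ = -(1 / 2) then
    if ε = 1 then 2 * j + m₂ - n - lam else -(2 * j - m₂ + n - lam)
  else
    if ε = 1 then 2 * j - m₂ + n + lam + 2 else 2 * j + m₂ - n + lam + 2

/-- The scalar identity at the computational core of Proposition 4.1: for each sign
`ε ∈ {+1, −1}` and each `j₀ ∈ {−1/2, +1/2}`,
`√((j−εm₂)(j+εm₂+1)) c(j₀, m₂+ε, −ε/2) − (1/2)(−ε(n+m₂)−λ−2) c(j₀, m₂, ε/2)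
  = (1/(2√(2j+1))) q_{j₀,ε} κ_{j₀,ε}`. -/
theorem su21_coefficient_identity (j m₂ n lam ε j₀ : ℝ)
    (hj : HalfInt j) (hj0 : 0 ≤ j) (hm₂ : HalfInt m₂)
    (hjm₂ : ∃ a : ℤ, j + m₂ = a) (hm₂l : -j ≤ m₂) (hm₂u : m₂ ≤ j)
    (hε : ε = 1 ∨ ε = -1) (hj₀ : j₀ = -(1 / 2) ∨ j₀ = 1 / 2) :
    Real.sqrt ((j - ε * m₂) * (j + ε * m₂ + 1)) * cgHalf j j₀ (m₂ + ε) (-ε / 2) -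
        (1 / 2) * (-ε * (n + m₂) - lam - 2) * cgHalf j j₀ m₂ (ε / 2) =
      1 / (2 * Real.sqrt (2 * j + 1)) * (qCoeff j m₂ j₀ ε * kappaCoeff j m₂ n lam j₀ ε) := by
  have hs : 0 < Real.sqrt (2*j+1) := Real.sqrt_pos.mpr (by linarith)
  rcases hε with hε | hε <;> rcases hj₀ with hj₀ | hj₀ <;> subst hε hj₀ <;>
    simp only [cgHalf, qCoeff, kappaCoeff] <;> norm_num
  · have hA : (0:ℝ) ≤ j - m₂ := by linarith
    have hB : (0:ℝ) ≤ j + m₂ + 1 := by linarith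
    have hbb : Real.sqrt (j+m₂+1) * Real.sqrt (j+m₂+1) = j+m₂+1 := Real.mul_self_sqrt hB
    rw [show j + (m₂+1) = j+m₂+1 by ring, Real.sqrt_mul hA, Real.sqrt_div hB, Real.sqrt_div hA]
    field_simp
    linear_combination (2*Real.sqrt (j-m₂)) * hbb
  · have hA : (0:ℝ) ≤ j - m₂ := by linarith
    have hB : (0:ℝ) ≤ j + m₂ + 1 := by linarith
    have haa : Real.sqrt (j-m₂) * Real.sqrt (j-m₂) = j-m₂ := Real.mul_self_sqrt hA
    rw [show j - (m₂+1) + 1 = j-m₂ by ring, Real.sqrt_mul hA, Real.sqrt_div hA, Real.sqrt_div hB]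
    field_simp
    linear_combination (2*Real.sqrt (j+m₂+1)) * haa
  · have hA : (0:ℝ) ≤ j + m₂ := by linarith
    have hB : (0:ℝ) ≤ j - m₂ + 1 := by linarith
    have hbb : Real.sqrt (j-m₂+1) * Real.sqrt (j-m₂+1) = j-m₂+1 := Real.mul_self_sqrt hB
    rw [show (j + m₂) * (j + -m₂ + 1) = (j+m₂)*(j-m₂+1) by ring,
        show j - (m₂ + -1) = j-m₂+1 by ring, Real.sqrt_mul hA, Real.sqrt_div hB, Real.sqrt_div hA]
    field_simp
    linear_combination (-2*Real.sqrt (j+m₂)) * hbb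
  · have hA : (0:ℝ) ≤ j + m₂ := by linarith
    have hB : (0:ℝ) ≤ j - m₂ + 1 := by linarith
    have haa : Real.sqrt (j+m₂) * Real.sqrt (j+m₂) = j+m₂ := Real.mul_self_sqrt hA
    rw [show (j + m₂) * (j + -m₂ + 1) = (j+m₂)*(j-m₂+1) by ring,
        show j + (m₂ + -1) + 1 = j+m₂ by ring, Real.sqrt_mul hA, Real.sqrt_div hA, Real.sqrt_div hB]
    field_simp
    linear_combination (2*Real.sqrt (j-m₂+1)) * haa
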